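/- For binary input X ~ Bernoulli(q_x) and binary state E ~ Bernoulli(p_e) independent of X, with zero battery and state known at the utility provider, the minimum conditional information leakage is inf_{p_{Y|X,E}: 0 ≤ X−Y ≤ E} I(X;Y|E) = (1−p_e)·h(q_x), where h is the binary entropy function. -/

import Mathlib

open Finset Real

noncomputable section

/-- `w` is a probability mass function on the finite sample space `Ω`. -/
def IsPMF {Ω : Type*} [Fintype Ω] (w : Ω → ℝ) : Prop :=
  (∀ ω, 0 ≤ w ω) ∧ ∑ ω, w ω = 1

/-- Distribution (pmf) of the random variable `X` under the weight `w`. -/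
def rvDist {Ω A : Type*} [Fintype Ω] [DecidableEq A] (w : Ω → ℝ) (X : Ω → A) (a : A) : ℝ :=
  ∑ ω, if X ω = a then w ω else 0

/-- Shannon entropy (in bits) of `X` under `w`. -/
def Hent {Ω A : Type*} [Fintype Ω] [Fintype A] [DecidableEq A] (w : Ω → ℝ) (X : Ω → A) : ℝ :=
  -∑ a, rvDist w X a * Real.logb 2 (rvDist w X a)

/-- Conditional entropy `H(X | Z)` (in bits). -/
def Hcond {Ω A C : Type*} [Fintype Ω] [Fintype A] [Fintype C] [DecidableEq A] [DecidableEq C]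
    (w : Ω → ℝ) (X : Ω → A) (Z : Ω → C) : ℝ :=
  Hent w (fun ω => (X ω, Z ω)) - Hent w Z

/-- Mutual information `I(X;Y)` (in bits). -/
def MI {Ω A B : Type*} [Fintype Ω] [Fintype A] [Fintype B] [DecidableEq A] [DecidableEq B]
    (w : Ω → ℝ) (X : Ω → A) (Y : Ω → B) : ℝ :=
  Hent w X + Hent w Y - Hent w (fun ω => (X ω, Y ω))

/-- Conditional mutual information `I(X;Y|E)` (in bits). -/
def CMI {Ω A B C : Type*} [Fintype Ω] [Fintype A] [Fintype B] [Fintype C]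
    [DecidableEq A] [DecidableEq B] [DecidableEq C]
    (w : Ω → ℝ) (X : Ω → A) (Y : Ω → B) (E : Ω → C) : ℝ :=
  Hent w (fun ω => (X ω, E ω)) + Hent w (fun ω => (Y ω, E ω))
    - Hent w (fun ω => (X ω, Y ω, E ω)) - Hent w E

/-- `X` and `E` are independent under `w`. -/
def IndepRV {Ω A C : Type*} [Fintype Ω] [DecidableEq A] [DecidableEq C]
    (w : Ω → ℝ) (X : Ω → A) (E : Ω → C) : Prop :=
  ∀ a c, rvDist w (fun ω => (X ω, E ω)) (a, c) = rvDist w X a * rvDist w E c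

/-- Real value of a binary load level. -/
def b2r (b : Bool) : ℝ := if b then 1 else 0

/-- Bernoulli pmf on `Bool` with success probability `q`. -/
def bern (q : ℝ) (b : Bool) : ℝ := if b then q else 1 - q

/-- Binary entropy function (in bits). -/
def binEnt (p : ℝ) : ℝ := -(p * Real.logb 2 p) - (1 - p) * Real.logb 2 (1 - p)


/-- Helper: `t * logb 2 t` of a product splits. -/
lemma mlog_mul_aux (a b : ℝ) (ha : 0 ≤ a) (hb : 0 ≤ b) :
    (a * b) * Real.logb 2 (a * b) = a * (b * Real.logb 2 b) + b * (a * Real.logb 2 a) := by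
  rcases ha.eq_or_lt with h | h
  · simp [← h]
  rcases hb.eq_or_lt with h' | h'
  · simp [← h']
  rw [Real.logb_mul h.ne' h'.ne']; ring

lemma binEnt_eq_aux (p : ℝ) : binEnt p = Real.binEntropy p / Real.log 2 := by
  rw [Real.binEntropy, Real.log_inv, Real.log_inv]; unfold binEnt Real.logb; ring

lemma binEnt_concave_pt (q α : ℝ) (hq0 : 0 ≤ q) (hq1 : q ≤ 1) (hα0 : 0 ≤ α) (hα1 : α ≤ 1) :
    q * binEnt α ≤ binEnt (q * α) := by
  have hc := (Real.strictConcave_binEntropy.concaveOn).2 (x := α) (y := 0)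
    (Set.mem_Icc.mpr ⟨hα0, hα1⟩) (Set.mem_Icc.mpr ⟨le_refl 0, zero_le_one⟩)
    hq0 (by linarith : (0:ℝ) ≤ 1 - q) (by ring)
  simp only [smul_eq_mul, Real.binEntropy_zero, mul_zero, add_zero] at hc
  have hl : 0 < Real.log 2 := Real.log_pos (by norm_num)
  rw [binEnt_eq_aux, binEnt_eq_aux, ← mul_div_assoc]
  exact (div_le_div_iff_of_pos_right hl).mpr hc

/-- The canonical channel with parameter `α = P(Y=1 | X=1, E=1)`. -/
def Kp (α : ℝ) (x e y : Bool) : ℝ :=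
  if e then (if x then (if y then α else 1 - α) else (if y then 0 else 1))
  else (if y = x then 1 else 0)

lemma cmi_structured (q pe α : ℝ) (hq0 : 0 ≤ q) (hq1 : q ≤ 1) (hpe0 : 0 ≤ pe)
    (hpe1 : pe ≤ 1) (hα0 : 0 ≤ α) (hα1 : α ≤ 1) :
    CMI (fun ω : Bool × Bool × Bool => bern q ω.1 * bern pe ω.2.1 * Kp α ω.1 ω.2.1 ω.2.2)
      (fun ω => ω.1) (fun ω => ω.2.2) (fun ω => ω.2.1)
    = (1 - pe) * binEnt q + pe * (binEnt (q * α) - q * binEnt α) := by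
  have hqa : 0 ≤ 1 - q * α := by nlinarith
  simp only [CMI, Hent, rvDist, Fintype.sum_prod_type, Fintype.sum_bool, bern, Kp]
  simp only [Prod.mk.injEq, if_true, if_false, Bool.true_eq_false, Bool.false_eq_true,
    and_true, and_false, true_and, false_and, if_true, if_false, ite_true, ite_false,
    mul_one, mul_zero, add_zero, zero_add, mul_ite]
  norm_num
  rw [show q*pe*α + q*pe*(1-α) = q*pe by ring,
      show q*pe*(1-α) + (1-q)*pe = pe*(1-q*α) by ring,
      show q*(1-pe) + (1-q)*(1-pe) = 1-pe by ring,
      show q*pe + (1-q)*pe = pe by ring]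
  rw [show q*pe*(1-α) = (q*pe)*(1-α) by ring]
  rw [mlog_mul_aux (q*pe) (1-α) (by positivity) (by linarith),
      mlog_mul_aux q pe hq0 hpe0,
      mlog_mul_aux (1-q) (1-pe) (by linarith) (by linarith),
      mlog_mul_aux q (1-pe) hq0 (by linarith),
      mlog_mul_aux pe (1-q*α) hpe0 hqa]
  unfold binEnt
  rw [mlog_mul_aux q α hq0 hα0]
  ring

/-- for binary `X ~ Bernoulli(q)` independent of the state `E ~ Bernoulli(p_e)`,
with zero battery and state known at the utility provider, the minimum conditional leakage is
`inf_{p_{Y|X,E} : 0 ≤ X−Y ≤ E} I(X;Y|E) = (1 − p_e)·h(q)`. -/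
theorem binary_known_state_leakage (q pe : ℝ)
    (hq : q ∈ Set.Ioo (0 : ℝ) 1) (hpe : pe ∈ Set.Icc (0 : ℝ) 1) :
    sInf {r | ∃ K : Bool → Bool → Bool → ℝ,
        (∀ x e y, 0 ≤ K x e y) ∧ (∀ x e, ∑ y, K x e y = 1) ∧
        (∀ x e y, 0 < K x e y → 0 ≤ b2r x - b2r y ∧ b2r x - b2r y ≤ b2r e) ∧
        r = CMI (fun ω : Bool × Bool × Bool => bern q ω.1 * bern pe ω.2.1 * K ω.1 ω.2.1 ω.2.2)
              (fun ω => ω.1) (fun ω => ω.2.2) (fun ω => ω.2.1)} =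
      (1 - pe) * binEnt q := by
  obtain ⟨hq0, hq1⟩ := hq
  obtain ⟨hpe0, hpe1⟩ := hpe
  apply IsLeast.csInf_eq
  constructor
  · -- membership: achieved by Kp 0
    refine ⟨Kp 0, ?_, ?_, ?_, ?_⟩
    · intro x e y; cases x <;> cases e <;> cases y <;> norm_num [Kp]
    · intro x e; rw [Fintype.sum_bool]; cases x <;> cases e <;> norm_num [Kp]
    · intro x e y h
      cases x <;> cases e <;> cases y <;> simp [Kp] at h ⊢ <;> norm_num [b2r]
    · rw [cmi_structured q pe 0 hq0.le hq1.le hpe0 hpe1 le_rfl zero_le_one]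
      norm_num [binEnt]
  · -- lower bound
    rintro r ⟨K, hK0, hK1, hKc, rfl⟩
    set α := K true true true with hαdef
    have hα0 : 0 ≤ α := hK0 _ _ _
    have hα1 : α ≤ 1 := by
      have h := hK1 true true; rw [Fintype.sum_bool] at h
      have := hK0 true true false; linarith
    have hz : ∀ x y : Bool, y ≠ x → K x false y = 0 := by
      intro x y hxy
      rcases (hK0 x false y).eq_or_lt with h | h
      · exact h.symm
      · exfalso
        obtain ⟨h1, h2⟩ := hKc x false y h
        revert h1 h2 hxy
        cases x <;> cases y <;> simp [b2r]
    have hzft : K false true true = 0 := by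
      rcases (hK0 false true true).eq_or_lt with h | h
      · exact h.symm
      · exfalso
        obtain ⟨h1, _⟩ := hKc false true true h
        simp [b2r] at h1; linarith
    have h1 : K false false true = 0 := hz false true (by simp)
    have h2 : K true false false = 0 := hz true false (by simp)
    have h3 : K false false false = 1 := by
      have := hK1 false false; rw [Fintype.sum_bool] at this; linarith
    have h4 : K true false true = 1 := by
      have := hK1 true false; rw [Fintype.sum_bool] at this; linarith
    have h5 : K false true false = 1 := by
      have := hK1 false true; rw [Fintype.sum_bool] at this; linarith
    have h6 : K true true false = 1 - α := by
      have := hK1 true true; rw [Fintype.sum_bool] at this; linarith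
    have hKeq : K = Kp α := by
      funext x e y
      cases x <;> cases e <;> cases y <;>
        simp only [Kp, if_true, if_false, Bool.false_eq_true, ite_true, ite_false] <;>
        simp [h1, h2, h3, h4, h5, h6, hzft, hαdef]
    rw [hKeq, cmi_structured q pe α hq0.le hq1.le hpe0 hpe1 hα0 hα1]
    have hge : q * binEnt α ≤ binEnt (q * α) :=
      binEnt_concave_pt q α hq0.le hq1.le hα0 hα1
    nlinarith [mul_le_mul_of_nonneg_left hge hpe0]
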